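/- Let d ≥ 2 and let (A_i)_{i=1}^{d²} be a COB on ℂ^d. Let m_i denote the smallest eigenvalue of A_i and set τ := max_{i} |m_i| and λ* := 1/(1 + d²τ). Then τ ≥ (√(d+1) − 1)/d², equivalently λ* ≤ 1/√(d+1). Moreover, equality holds if and only if every A_i has the eigenvalue (1 + (d−1)√(d+1))/d² with multiplicity 1 and the eigenvalue (1 − √(d+1))/d² with multiplicity d−1. -/

import Mathlib

open scoped ComplexOrder

set_option maxHeartbeats 1000000

private lemma cob_aux_main (D s u v : ℝ) (hD : 2 ≤ D) (hs2 : s ^ 2 = D + 1) (hs0 : 0 < s)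
    (h1 : D ^ 2 + u * v ≤ u + v)
    (h2 : (v - 1) ^ 2 ≤ (D - 1) * (D * (D ^ 2 - 1) - (v - 1) ^ 2))
    (hu : u ≤ 1) (hv : 1 ≤ v) :
    u ≤ 1 - s ∧ v ≤ 1 + (D - 1) * s := by
  have hD0 : (0:ℝ) < D := by linarith
  have heq : D * (D - 1) ^ 2 * s ^ 2 = D * (D - 1) ^ 2 * (D + 1) := by rw [hs2]
  have heq2 : (D - 1) * s ^ 2 = (D - 1) * (D + 1) := by rw [hs2]
  have h2' : D * ((v - 1) ^ 2) ≤ D * (((D - 1) * s) ^ 2) := by nlinarith [h2, heq]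
  have hv1 : (v - 1) ^ 2 ≤ ((D - 1) * s) ^ 2 := le_of_mul_le_mul_left h2' hD0
  have hB : 0 ≤ (D - 1) * s := mul_nonneg (by linarith) hs0.le
  have hvle : v ≤ 1 + (D - 1) * s := by nlinarith [hv1, hB, hv]
  refine ⟨?_, hvle⟩
  have hprod : 0 ≤ (1 - u) * (1 + (D - 1) * s - v) :=
    mul_nonneg (by linarith) (by linarith)
  have hpos : 0 < (D - 1) * s := mul_pos (by linarith) hs0
  nlinarith [h1, hprod, heq2, hpos]

private lemma cob_aux_eq (D s u v : ℝ) (hD : 2 ≤ D) (hs2 : s ^ 2 = D + 1) (hs0 : 0 < s)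
    (h1 : D ^ 2 + u * v ≤ u + v)
    (hvle : v ≤ 1 + (D - 1) * s) (hueq : u = 1 - s) : v = 1 + (D - 1) * s := by
  refine le_antisymm hvle ?_
  rw [hueq] at h1
  have heq2 : (D - 1) * s ^ 2 = (D - 1) * (D + 1) := by rw [hs2]
  nlinarith [h1, heq2, hs0]

lemma cob_core (d : ℕ) (hd : 2 ≤ d) (x : Fin d → ℝ)
    (hs : ∑ k, x k = 1 / (d : ℝ)) (hq : ∑ k, x k ^ 2 = 1 / (d : ℝ)) :
    (⨅ k, x k) ≤ (1 - Real.sqrt ((d : ℝ) + 1)) / (d : ℝ) ^ 2 ∧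
    ((⨅ k, x k) = (1 - Real.sqrt ((d : ℝ) + 1)) / (d : ℝ) ^ 2 ↔
      (Finset.univ.filter fun k =>
          x k = (1 + ((d : ℝ) - 1) * Real.sqrt ((d : ℝ) + 1)) / (d : ℝ) ^ 2).card = 1 ∧
      (Finset.univ.filter fun k =>
          x k = (1 - Real.sqrt ((d : ℝ) + 1)) / (d : ℝ) ^ 2).card = d - 1) := by
  classical
  have hdpos : 0 < d := by omega
  haveI : Nonempty (Fin d) := ⟨⟨0, hdpos⟩⟩
  have hD2 : (2:ℝ) ≤ (d:ℝ) := by exact_mod_cast hd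
  have hD0 : (0:ℝ) < (d:ℝ) := by linarith
  have hDne : (d:ℝ) ≠ 0 := ne_of_gt hD0
  set s : ℝ := Real.sqrt ((d:ℝ) + 1) with hsdef
  have hs2 : s ^ 2 = (d:ℝ) + 1 := Real.sq_sqrt (by linarith)
  have hs0 : 0 < s := Real.sqrt_pos.mpr (by linarith)
  have hs1 : 1 < s := by nlinarith
  set c : ℝ := (1 - s) / (d:ℝ) ^ 2 with hc
  set a : ℝ := (1 + ((d:ℝ) - 1) * s) / (d:ℝ) ^ 2 with ha
  have hsq : (0:ℝ) < (d:ℝ)^2 := by positivity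
  have hca : c < a := by
    rw [hc, ha, div_lt_div_iff₀ hsq hsq]
    nlinarith [mul_pos (mul_pos hs0 hsq) hD0]
  -- min and max attained
  obtain ⟨k0, hk0⟩ := Finite.exists_min x
  obtain ⟨k1, hk1⟩ := Finite.exists_max x
  set m : ℝ := x k0 with hmdef
  set M : ℝ := x k1 with hMdef
  have hinf : (⨅ k, x k) = m :=
    le_antisymm (ciInf_le (Set.Finite.bddBelow (Set.finite_range x)) k0) (le_ciInf hk0)
  -- E1 : sum of (x k - m)(M - x k) ≥ 0 and its value
  have hE1 : 0 ≤ ∑ k, (x k - m) * (M - x k) :=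
    Finset.sum_nonneg fun k _ => mul_nonneg (by linarith [hk0 k]) (by linarith [hk1 k])
  have hE1exp : ∑ k, (x k - m) * (M - x k)
      = (m + M) * (1/(d:ℝ)) - 1/(d:ℝ) - (d:ℝ) * (m * M) := by
    have h1 : ∀ k ∈ Finset.univ, (x k - m) * (M - x k)
        = (m + M) * (x k) - x k ^ 2 - m * M := fun k _ => by ring
    rw [Finset.sum_congr rfl h1, Finset.sum_sub_distrib, Finset.sum_sub_distrib,
      ← Finset.mul_sum, hs, hq, Finset.sum_const, Finset.card_univ, Fintype.card_fin,
      nsmul_eq_mul]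
  have h1' : 0 ≤ (m + M) * (1/(d:ℝ)) - 1/(d:ℝ) - (d:ℝ) * (m * M) := hE1exp ▸ hE1
  -- scaled variables u = m d², v = M d²
  have hE1u : (d:ℝ) ^ 2 + (m * (d:ℝ)^2) * (M * (d:ℝ)^2) ≤ m * (d:ℝ)^2 + M * (d:ℝ)^2 := by
    have h2 := mul_le_mul_of_nonneg_left h1' (le_of_lt (mul_pos hD0 hsq))
    rw [mul_zero] at h2
    have h3 : ((d:ℝ) * (d:ℝ)^2) * ((m + M) * (1/(d:ℝ)) - 1/(d:ℝ) - (d:ℝ) * (m * M))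
        = m * (d:ℝ)^2 + M * (d:ℝ)^2 - ((d:ℝ)^2 + (m * (d:ℝ)^2) * (M * (d:ℝ)^2)) := by
      field_simp
      ring
    rw [h3] at h2
    linarith
  -- mean bounds
  have hmean_m : (d:ℝ) * m ≤ 1 / (d:ℝ) := by
    calc (d:ℝ) * m = ∑ _k : Fin d, m := by
          rw [Finset.sum_const, Finset.card_univ, Fintype.card_fin, nsmul_eq_mul]
      _ ≤ ∑ k, x k := Finset.sum_le_sum (fun k _ => hk0 k)
      _ = 1 / (d:ℝ) := hs
  have hmean_M : 1 / (d:ℝ) ≤ (d:ℝ) * M := by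
    calc (1:ℝ) / (d:ℝ) = ∑ k, x k := hs.symm
      _ ≤ ∑ _k : Fin d, M := Finset.sum_le_sum (fun k _ => hk1 k)
      _ = (d:ℝ) * M := by
          rw [Finset.sum_const, Finset.card_univ, Fintype.card_fin, nsmul_eq_mul]
  have hu1 : m * (d:ℝ)^2 ≤ 1 := by
    have h2 := mul_le_mul_of_nonneg_left hmean_m hD0.le
    have h3 : (d:ℝ) * ((d:ℝ) * m) = m * (d:ℝ)^2 := by ring
    have h4 : (d:ℝ) * (1/(d:ℝ)) = 1 := by field_simp
    rw [h3, h4] at h2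
    exact h2
  have hv1 : 1 ≤ M * (d:ℝ)^2 := by
    have h2 := mul_le_mul_of_nonneg_left hmean_M hD0.le
    have h3 : (d:ℝ) * ((d:ℝ) * M) = M * (d:ℝ)^2 := by ring
    have h4 : (d:ℝ) * (1/(d:ℝ)) = 1 := by field_simp
    rw [h3, h4] at h2
    exact h2
  -- Samuelson / Cauchy-Schwarz for the max
  have hMdev : M - 1/(d:ℝ)^2 = ∑ k ∈ Finset.univ.erase k1, (1/(d:ℝ)^2 - x k) := by
    have h2 : ∑ k ∈ Finset.univ.erase k1, (1/(d:ℝ)^2 - x k) + (1/(d:ℝ)^2 - M)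
        = ∑ k, (1/(d:ℝ)^2 - x k) :=
      Finset.sum_erase_add Finset.univ _ (Finset.mem_univ k1)
    have h3 : ∑ k, (1/(d:ℝ)^2 - x k) = 0 := by
      rw [Finset.sum_sub_distrib, hs, Finset.sum_const, Finset.card_univ,
        Fintype.card_fin, nsmul_eq_mul]
      field_simp
      ring
    rw [h3] at h2
    linarith
  have hvarsplit : ∑ k ∈ Finset.univ.erase k1, (1/(d:ℝ)^2 - x k)^2
      = (1/(d:ℝ) - 1/(d:ℝ)^3) - (M - 1/(d:ℝ)^2)^2 := by
    have h2 : ∑ k ∈ Finset.univ.erase k1, (1/(d:ℝ)^2 - x k)^2 + (1/(d:ℝ)^2 - M)^2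
        = ∑ k, (1/(d:ℝ)^2 - x k)^2 :=
      Finset.sum_erase_add Finset.univ _ (Finset.mem_univ k1)
    have h3 : ∑ k, (1/(d:ℝ)^2 - x k)^2 = 1/(d:ℝ) - 1/(d:ℝ)^3 := by
      have h4 : ∀ k ∈ Finset.univ, (1/(d:ℝ)^2 - x k)^2
          = x k ^2 - (2/(d:ℝ)^2) * x k + 1/(d:ℝ)^4 := fun k _ => by ring
      rw [Finset.sum_congr rfl h4]
      rw [Finset.sum_add_distrib, Finset.sum_sub_distrib, ← Finset.mul_sum, hs, hq,
        Finset.sum_const, Finset.card_univ, Fintype.card_fin, nsmul_eq_mul]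
      field_simp
      ring
    rw [h3] at h2
    nlinarith [h2]
  have hCS := sq_sum_le_card_mul_sum_sq (s := Finset.univ.erase k1)
    (f := fun k => 1/(d:ℝ)^2 - x k)
  have hcard_erase : (((Finset.univ.erase k1).card : ℕ) : ℝ) = (d:ℝ) - 1 := by
    rw [Finset.card_erase_of_mem (Finset.mem_univ k1), Finset.card_univ, Fintype.card_fin]
    have h1 : (1:ℕ) ≤ d := by omega
    push_cast [Nat.cast_sub h1]
    ring
  beta_reduce at hCS
  rw [← hMdev, hvarsplit, hcard_erase] at hCS
  have hCSu : (M * (d:ℝ)^2 - 1)^2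
      ≤ ((d:ℝ) - 1) * ((d:ℝ) * ((d:ℝ)^2 - 1) - (M * (d:ℝ)^2 - 1)^2) := by
    have h2 := mul_le_mul_of_nonneg_left hCS (le_of_lt (pow_pos hD0 4))
    have h3 : (d:ℝ)^4 * ((M - 1/(d:ℝ)^2)^2) = (M * (d:ℝ)^2 - 1)^2 := by
      field_simp
    have h4 : (d:ℝ)^4 * (((d:ℝ) - 1) * ((1/(d:ℝ) - 1/(d:ℝ)^3) - (M - 1/(d:ℝ)^2)^2))
        = ((d:ℝ) - 1) * ((d:ℝ) * ((d:ℝ)^2 - 1) - (M * (d:ℝ)^2 - 1)^2) := by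
      field_simp
    rw [h3, h4] at h2
    exact h2
  -- apply the polynomial helper
  obtain ⟨humain, hvmain⟩ :=
    cob_aux_main (d:ℝ) s (m * (d:ℝ)^2) (M * (d:ℝ)^2) hD2 hs2 hs0 hE1u hCSu hu1 hv1
  have hmc : m ≤ c := by
    rw [hc, le_div_iff₀ hsq]
    exact humain
  have hMa : M ≤ a := by
    rw [ha, le_div_iff₀ hsq]
    exact hvmain
  constructor
  · rw [hinf]; exact hmc
  constructor
  · -- forward: equality implies the multiplicity structure
    intro heq
    rw [hinf] at heq
    -- M = a
    have hueq : m * (d:ℝ)^2 = 1 - s := by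
      rw [heq, hc]
      field_simp
    have hveq : M * (d:ℝ)^2 = 1 + ((d:ℝ) - 1) * s :=
      cob_aux_eq (d:ℝ) s (m * (d:ℝ)^2) (M * (d:ℝ)^2) hD2 hs2 hs0 hE1u hvmain hueq
    have hMa' : M = a := by
      rw [ha, eq_div_iff (ne_of_gt hsq)]
      exact hveq
    -- the E1 sum is exactly zero
    have hval : (m + M) * (1/(d:ℝ)) - 1/(d:ℝ) - (d:ℝ) * (m * M) = 0 := by
      rw [heq, hMa', hc, ha]
      field_simp
      ring_nf
      linear_combination ((d:ℝ) - 1) * hs2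
    have hE1zero : ∀ k ∈ Finset.univ, (x k - m) * (M - x k) = 0 := by
      rw [← Finset.sum_eq_zero_iff_of_nonneg
        (fun k _ => mul_nonneg (by linarith [hk0 k]) (by linarith [hk1 k]))]
      rw [hE1exp, hval]
    have hvals : ∀ k, x k = c ∨ x k = a := by
      intro k
      rcases mul_eq_zero.mp (hE1zero k (Finset.mem_univ k)) with h | h
      · left; rw [← heq]; linarith [sub_eq_zero.mp h]
      · right; rw [← hMa']; linarith [sub_eq_zero.mp h]
    -- counting
    have hdisj : Disjoint (Finset.univ.filter fun k => x k = a)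
        (Finset.univ.filter fun k => x k = c) := by
      refine Finset.disjoint_left.mpr ?_
      intro k hkT hkC
      have h1 := (Finset.mem_filter.mp hkT).2
      have h2 := (Finset.mem_filter.mp hkC).2
      rw [h1] at h2
      exact absurd h2 (ne_of_gt hca)
    have hunion : (Finset.univ.filter fun k => x k = a) ∪
        (Finset.univ.filter fun k => x k = c) = Finset.univ := by
      apply Finset.eq_univ_of_forall
      intro k
      rcases hvals k with h | h
      · exact Finset.mem_union_right _ (Finset.mem_filter.mpr ⟨Finset.mem_univ k, h⟩)
      · exact Finset.mem_union_left _ (Finset.mem_filter.mpr ⟨Finset.mem_univ k, h⟩)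
    have hcards : (Finset.univ.filter fun k => x k = a).card
        + (Finset.univ.filter fun k => x k = c).card = d := by
      rw [← Finset.card_union_of_disjoint hdisj, hunion, Finset.card_univ, Fintype.card_fin]
    have hsum_split : ((Finset.univ.filter fun k => x k = a).card : ℝ) * a
        + ((Finset.univ.filter fun k => x k = c).card : ℝ) * c = 1/(d:ℝ) := by
      have h8 : ∑ k ∈ (Finset.univ.filter fun k => x k = a), x k
          = ((Finset.univ.filter fun k => x k = a).card : ℝ) * a := by
        rw [Finset.sum_congr rfl (fun k hk => (Finset.mem_filter.mp hk).2),
          Finset.sum_const, nsmul_eq_mul]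
      have h9 : ∑ k ∈ (Finset.univ.filter fun k => x k = c), x k
          = ((Finset.univ.filter fun k => x k = c).card : ℝ) * c := by
        rw [Finset.sum_congr rfl (fun k hk => (Finset.mem_filter.mp hk).2),
          Finset.sum_const, nsmul_eq_mul]
      have h10 : ∑ k ∈ ((Finset.univ.filter fun k => x k = a) ∪
          (Finset.univ.filter fun k => x k = c)), x k = 1/(d:ℝ) := by
        rw [hunion]; exact hs
      rw [Finset.sum_union hdisj, h8, h9] at h10
      exact h10
    have hiden : a + ((d:ℝ) - 1) * c = 1/(d:ℝ) := by
      rw [ha, hc]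
      field_simp
      ring
    have hccast : ((Finset.univ.filter fun k => x k = c).card : ℝ)
        = (d:ℝ) - ((Finset.univ.filter fun k => x k = a).card : ℝ) := by
      have h11 : ((Finset.univ.filter fun k => x k = a).card : ℝ)
          + ((Finset.univ.filter fun k => x k = c).card : ℝ) = (d:ℝ) := by
        exact_mod_cast hcards
      linarith
    have hzero : (((Finset.univ.filter fun k => x k = a).card : ℝ) - 1) * (a - c) = 0 := by
      rw [hccast] at hsum_split
      linear_combination hsum_split - hiden
    have htcard : (Finset.univ.filter fun k => x k = a).card = 1 := by
      rcases mul_eq_zero.mp hzero with h | h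
      · have : ((Finset.univ.filter fun k => x k = a).card : ℝ) = 1 := by linarith
        exact_mod_cast this
      · exact absurd (sub_eq_zero.mp h) (ne_of_gt hca)
    refine ⟨htcard, ?_⟩
    omega
  · -- reverse: multiplicity structure implies equality
    rintro ⟨hT, hC⟩
    have hdisj : Disjoint (Finset.univ.filter fun k => x k = a)
        (Finset.univ.filter fun k => x k = c) := by
      refine Finset.disjoint_left.mpr ?_
      intro k hkT hkC
      have h1 := (Finset.mem_filter.mp hkT).2
      have h2 := (Finset.mem_filter.mp hkC).2
      rw [h1] at h2
      exact absurd h2 (ne_of_gt hca)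
    have hunion : (Finset.univ.filter fun k => x k = a) ∪
        (Finset.univ.filter fun k => x k = c) = Finset.univ := by
      apply Finset.eq_univ_of_card
      rw [Finset.card_union_of_disjoint hdisj, hT, hC, Fintype.card_fin]
      omega
    have hvals : ∀ k, x k = a ∨ x k = c := by
      intro k
      have hk : k ∈ (Finset.univ.filter fun k => x k = a) ∪
          (Finset.univ.filter fun k => x k = c) := by
        rw [hunion]; exact Finset.mem_univ k
      rcases Finset.mem_union.mp hk with h | h
      · exact Or.inl (Finset.mem_filter.mp h).2
      · exact Or.inr (Finset.mem_filter.mp h).2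
    have hex : ∃ k, x k = c := by
      have hpos : 0 < (Finset.univ.filter fun k => x k = c).card := by omega
      obtain ⟨k, hk⟩ := Finset.card_pos.mp hpos
      exact ⟨k, (Finset.mem_filter.mp hk).2⟩
    obtain ⟨kc, hkc⟩ := hex
    rw [hinf]
    refine le_antisymm (hkc ▸ hk0 kc) ?_
    rcases hvals k0 with h | h
    · rw [← hmdef] at h; rw [h]; exact le_of_lt hca
    · rw [← hmdef] at h; rw [h]


open Matrix

lemma herm_trace_eq {n : Type*} [Fintype n] [DecidableEq n] {A : Matrix n n ℂ}
    (hA : A.IsHermitian) : A.trace = ∑ i, (hA.eigenvalues i : ℂ) := by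
  have hU' : star (hA.eigenvectorUnitary : Matrix n n ℂ) * (hA.eigenvectorUnitary : Matrix n n ℂ) = 1 :=
    Matrix.mem_unitaryGroup_iff'.mp (hA.eigenvectorUnitary).2
  have hspec : A = (hA.eigenvectorUnitary : Matrix n n ℂ) * Matrix.diagonal ((↑) ∘ hA.eigenvalues)
      * star (hA.eigenvectorUnitary : Matrix n n ℂ) := hA.spectral_theorem
  conv_lhs => rw [hspec]
  rw [Matrix.trace_mul_cycle, hU', Matrix.one_mul, Matrix.trace_diagonal]
  rfl

lemma herm_trace_sq_eq {n : Type*} [Fintype n] [DecidableEq n] {A : Matrix n n ℂ}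
    (hA : A.IsHermitian) : (A * A).trace = ∑ i, ((hA.eigenvalues i : ℂ)) ^ 2 := by
  have hU : (hA.eigenvectorUnitary : Matrix n n ℂ) * star (hA.eigenvectorUnitary : Matrix n n ℂ) = 1 :=
    Matrix.mem_unitaryGroup_iff.mp (hA.eigenvectorUnitary).2
  have hU' : star (hA.eigenvectorUnitary : Matrix n n ℂ) * (hA.eigenvectorUnitary : Matrix n n ℂ) = 1 :=
    Matrix.mem_unitaryGroup_iff'.mp (hA.eigenvectorUnitary).2
  set U : Matrix n n ℂ := (hA.eigenvectorUnitary : Matrix n n ℂ) with hUdef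
  set D : Matrix n n ℂ := Matrix.diagonal ((↑) ∘ hA.eigenvalues) with hDdef
  have hspec : A = U * D * star U := hA.spectral_theorem
  have h1 : A * A = U * (D * D) * star U := by
    rw [hspec]
    calc U * D * star U * (U * D * star U) = U * D * (star U * U) * (D * star U) := by
          noncomm_ring
      _ = U * (D * D) * star U := by rw [hU']; noncomm_ring
  rw [h1, Matrix.trace_mul_cycle, hU', Matrix.one_mul]
  rw [hDdef, Matrix.diagonal_mul_diagonal, Matrix.trace_diagonal]
  simp [sq]

/-- For a COB `(A i)` on `ℂ^d` with smallest eigenvalues `m i`,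
`τ := max_i |m i|` and `λ* := 1/(1 + d²τ)`, one has `τ ≥ (√(d+1)-1)/d²`,
equivalently `λ* ≤ 1/√(d+1)`, with equality iff every `A i` has eigenvalue
`(1 + (d-1)√(d+1))/d²` with multiplicity 1 and `(1 - √(d+1))/d²` with
multiplicity `d-1`. -/
theorem cob_lambdaStar_bound (d : ℕ) (hd : 2 ≤ d)
    (A : Fin (d ^ 2) → Matrix (Fin d) (Fin d) ℂ)
    (hherm : ∀ i, (A i).IsHermitian)
    (horth : ∀ i j, (A i * A j).trace = if i = j then (1 / (d : ℂ)) else 0)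
    (hsum : ∑ i, A i = 1)
    (m : Fin (d ^ 2) → ℝ) (hm : ∀ i, m i = ⨅ k, (hherm i).eigenvalues k)
    (τ : ℝ) (hτ : τ = ⨆ i, |m i|)
    (lamStar : ℝ) (hlam : lamStar = 1 / (1 + d ^ 2 * τ)) :
    (Real.sqrt (d + 1) - 1) / d ^ 2 ≤ τ ∧
    lamStar ≤ 1 / Real.sqrt (d + 1) ∧
    (lamStar = 1 / Real.sqrt (d + 1) ↔
      ∀ i, (Finset.univ.filter fun k =>
              (hherm i).eigenvalues k =
                (1 + ((d : ℝ) - 1) * Real.sqrt (d + 1)) / d ^ 2).card = 1 ∧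
           (Finset.univ.filter fun k =>
              (hherm i).eigenvalues k =
                (1 - Real.sqrt (d + 1)) / d ^ 2).card = d - 1) := by
  classical
  have hdpos : 0 < d := by omega
  haveI : Nonempty (Fin (d ^ 2)) := ⟨⟨0, pow_pos hdpos 2⟩⟩
  haveI : Nonempty (Fin d) := ⟨⟨0, hdpos⟩⟩
  have hD0 : (0:ℝ) < (d:ℝ) := by exact_mod_cast hdpos
  have hsq : (0:ℝ) < (d:ℝ)^2 := by positivity
  have hD2 : (2:ℝ) ≤ (d:ℝ) := by exact_mod_cast hd
  set s : ℝ := Real.sqrt ((d:ℝ) + 1) with hsdef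
  have hs2 : s ^ 2 = (d:ℝ) + 1 := Real.sq_sqrt (by linarith)
  have hs0 : 0 < s := Real.sqrt_pos.mpr (by linarith)
  have hs1 : 1 < s := by nlinarith
  -- traces
  have htr : ∀ i, (A i).trace = 1/(d:ℂ) := by
    intro i
    have h1 : (A i).trace = ∑ j, (A i * A j).trace := by
      rw [← Matrix.trace_sum, ← Matrix.mul_sum, hsum, mul_one]
    rw [h1, Finset.sum_congr rfl (fun j _ => horth i j)]
    simp
  have hsr : ∀ i, ∑ k, (hherm i).eigenvalues k = 1/(d:ℝ) := by
    intro i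
    have h1 := htr i
    rw [herm_trace_eq (hherm i)] at h1
    have h2 : ((∑ k, (hherm i).eigenvalues k : ℝ) : ℂ) = (((1:ℝ)/(d:ℝ) : ℝ) : ℂ) := by
      push_cast
      exact h1
    exact_mod_cast h2
  have hqr : ∀ i, ∑ k, ((hherm i).eigenvalues k)^2 = 1/(d:ℝ) := by
    intro i
    have h1 := horth i i
    rw [if_pos rfl, herm_trace_sq_eq (hherm i)] at h1
    have h2 : ((∑ k, ((hherm i).eigenvalues k)^2 : ℝ) : ℂ) = (((1:ℝ)/(d:ℝ) : ℝ) : ℂ) := by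
      push_cast
      exact h1
    exact_mod_cast h2
  have hcore := fun i => cob_core d hd ((hherm i).eigenvalues) (hsr i) (hqr i)
  have hmc : ∀ i, m i ≤ (1 - s)/(d:ℝ)^2 := fun i => by
    rw [hm i]; exact (hcore i).1
  have hflip : -((1 - s)/(d:ℝ)^2) = (s - 1)/(d:ℝ)^2 := by ring
  have hcneg : (1 - s)/(d:ℝ)^2 ≤ 0 := by
    apply div_nonpos_of_nonpos_of_nonneg <;> nlinarith
  have habs : ∀ i, (s - 1)/(d:ℝ)^2 ≤ |m i| := by
    intro i
    have h1 := hmc i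
    rw [abs_of_nonpos (le_trans h1 hcneg)]
    linarith
  have hbdd : BddAbove (Set.range fun i => |m i|) := Set.Finite.bddAbove (Set.finite_range _)
  have hτ_ge_abs : ∀ i, |m i| ≤ τ := fun i => hτ ▸ le_ciSup hbdd i
  obtain ⟨i0⟩ : Nonempty (Fin (d^2)) := inferInstance
  have hτb : (s - 1)/(d:ℝ)^2 ≤ τ := le_trans (habs i0) (hτ_ge_abs i0)
  have hd2τ : (d:ℝ)^2 * ((s-1)/(d:ℝ)^2) = s - 1 := by field_simp
  have hsum_pos : s ≤ 1 + (d:ℝ)^2 * τ := by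
    have h3 := mul_le_mul_of_nonneg_left hτb (le_of_lt hsq)
    rw [hd2τ] at h3
    linarith
  have hpos2 : (0:ℝ) < 1 + (d:ℝ)^2 * τ := lt_of_lt_of_le hs0 hsum_pos
  refine ⟨hτb, ?_, ?_⟩
  · rw [hlam]
    exact one_div_le_one_div_of_le hs0 hsum_pos
  · rw [hlam]
    have hiff1 : 1/(1 + (d:ℝ)^2 * τ) = 1/s ↔ τ = (s - 1)/(d:ℝ)^2 := by
      rw [div_eq_div_iff (ne_of_gt hpos2) (ne_of_gt hs0), one_mul, one_mul]
      constructor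
      · intro h
        rw [eq_div_iff (ne_of_gt hsq)]
        linarith
      · intro h
        rw [h, hd2τ]
        ring
    have hiff2 : τ = (s - 1)/(d:ℝ)^2 ↔ ∀ i, m i = (1 - s)/(d:ℝ)^2 := by
      constructor
      · intro h i
        have h1 := hτ_ge_abs i
        rw [h] at h1
        have h2 := habs i
        have h3 : |m i| = (s - 1)/(d:ℝ)^2 := le_antisymm h1 h2
        rw [abs_of_nonpos (le_trans (hmc i) hcneg)] at h3
        linarith
      · intro h
        rw [hτ]
        refine le_antisymm (ciSup_le fun i => ?_) (le_trans (habs i0) (le_ciSup hbdd i0))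
        rw [h i, abs_of_nonpos hcneg]
        linarith
    have hiff3 : (∀ i, m i = (1 - s)/(d:ℝ)^2) ↔
        ∀ i, (Finset.univ.filter fun k =>
              (hherm i).eigenvalues k = (1 + ((d : ℝ) - 1) * s) / (d:ℝ) ^ 2).card = 1 ∧
           (Finset.univ.filter fun k =>
              (hherm i).eigenvalues k = (1 - s) / (d:ℝ) ^ 2).card = d - 1 := by
      refine forall_congr' fun i => ?_
      rw [hm i]
      exact (hcore i).2
    exact hiff1.trans (hiff2.trans hiff3)
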